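/- Let A be a symmetric weakly irreducible nonnegative tensor of order m and dimension n that is spectral ℓ-symmetric with ℓ ≥ 2. Then A is (m,ℓ)-colorable: there exists a map φ : [n] → {1,...,m} such that whenever a_{i1...im} ≠ 0, φ(i1) + ··· + φ(im) ≡ m/ℓ (mod m). -/

import Mathlib

open BigOperators

/-- An order-`m`, dimension-`n` real tensor (hypermatrix). -/
abbrev Tensor (m n : ℕ) : Type := (Fin m → Fin n) → ℝ

/-- The primitive rotation `e^{i·2π/k}` of the complex plane. -/
noncomputable def rot (k : ℕ) : ℂ := Complex.exp (2 * (Real.pi : ℂ) * Complex.I / (k : ℂ))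

/-- A tensor is nonnegative if all its entries are nonnegative. -/
def Tensor.Nonneg {m n : ℕ} (A : Tensor m n) : Prop := ∀ α, 0 ≤ A α

/-- A tensor is symmetric if its entries are invariant under permutations of indices. -/
def Tensor.Symm {m n : ℕ} (A : Tensor m n) : Prop :=
  ∀ (σ : Equiv.Perm (Fin m)) (α : Fin m → Fin n), A (α ∘ σ) = A α

/-- Arc `(i,j)` of the digraph associated to `A`: some entry `a_{i i₂ … i_m} ≠ 0`
with `j` among the later indices. -/
def Tensor.Arc {m n : ℕ} [NeZero m] (A : Tensor m n) (i j : Fin n) : Prop :=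
  ∃ α : Fin m → Fin n, A α ≠ 0 ∧ α 0 = i ∧ ∃ k : Fin m, k ≠ 0 ∧ α k = j

/-- `A` is weakly irreducible if its associated digraph is strongly connected. -/
def Tensor.WeaklyIrreducible {m n : ℕ} [NeZero m] (A : Tensor m n) : Prop :=
  ∀ i j : Fin n, Relation.ReflTransGen A.Arc i j

/-- The eigenvalue equations `(A x^{m-1})_i = λ x_i^{m-1}` for all `i`. -/
def Tensor.EigEq {m n : ℕ} [NeZero m] (A : Tensor m n) (lam : ℂ) (x : Fin n → ℂ) : Prop :=
  ∀ i : Fin n,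
    (∑ α : Fin m → Fin n,
      if α 0 = i then (A α : ℂ) * ∏ k ∈ Finset.univ.erase (0 : Fin m), x (α k) else 0)
    = lam * x i ^ (m - 1)

/-- `lam` is an eigenvalue of the tensor `A`. -/
def Tensor.IsEig {m n : ℕ} [NeZero m] (A : Tensor m n) (lam : ℂ) : Prop :=
  ∃ x : Fin n → ℂ, x ≠ 0 ∧ A.EigEq lam x

/-- `A` is spectral `ℓ`-symmetric: its spectrum is invariant under rotation by `e^{i2π/ℓ}`. -/
def Tensor.SpectralSym {m n : ℕ} [NeZero m] (ℓ : ℕ) (A : Tensor m n) : Prop :=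
  ∀ lam : ℂ, A.IsEig lam ↔ A.IsEig (rot ℓ * lam)

/-- `A = e^{-iθ} D^{-(m-1)} A D` for the diagonal matrix `D = diag d`, entrywise. -/
def Tensor.DiagSim {m n : ℕ} [NeZero m] (A : Tensor m n) (θ : ℝ) (d : Fin n → ℂ) : Prop :=
  ∀ α : Fin m → Fin n,
    (A α : ℂ) = Complex.exp (-(θ : ℂ) * Complex.I) * d (α 0) ^ (-((m : ℤ) - 1)) * (A α : ℂ) *
      ∏ k ∈ Finset.univ.erase (0 : Fin m), d (α k)

/-- The set `𝔇^{(j)}` of normalized unimodular diagonal matrices `D` with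
`A = e^{-i2πj/ℓ} D^{-(m-1)} A D`. -/
def Tensor.DSet {m n : ℕ} [NeZero m] [NeZero n] (A : Tensor m n) (ℓ j : ℕ) :
    Set (Fin n → ℂ) :=
  {d | d 0 = 1 ∧ (∀ i, ‖d i‖ = 1) ∧ A.DiagSim (2 * Real.pi * j / ℓ) d}

/-- The set `𝔇 = ⋃_{j=0}^{ℓ-1} 𝔇^{(j)}`. -/
def Tensor.DFull {m n : ℕ} [NeZero m] [NeZero n] (A : Tensor m n) (ℓ : ℕ) :
    Set (Fin n → ℂ) :=
  ⋃ j ∈ Finset.range ℓ, A.DSet ℓ j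

/-- An `m`-uniform hypergraph on vertex set `Fin n`. -/
structure UniformHypergraph (m n : ℕ) where
  edges : Finset (Finset (Fin n))
  uniform : ∀ e ∈ edges, e.card = m

/-- The adjacency tensor of an `m`-uniform hypergraph. -/
noncomputable def UniformHypergraph.adjTensor {m n : ℕ} (G : UniformHypergraph m n) : Tensor m n :=
  fun α => if Finset.image α Finset.univ ∈ G.edges then (1 : ℝ) / (m - 1).factorial else 0

/-- A hypergraph is connected if every two vertices are joined by a walk. -/
def UniformHypergraph.Connected {m n : ℕ} (G : UniformHypergraph m n) : Prop :=
  ∀ i j : Fin n, Relation.ReflTransGen (fun u v => ∃ e ∈ G.edges, u ∈ e ∧ v ∈ e) i j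

namespace PFaux
open Finset

variable {m n : ℕ}

/-- the homogeneous form `F(x) = ∑_α A_α ∏_k x_{α k}` -/
noncomputable def tF (A : Tensor m n) (x : Fin n → ℝ) : ℝ :=
  ∑ α : Fin m → Fin n, A α * ∏ k : Fin m, x (α k)

/-- the `i`-th component of `A x^{m-1}` -/
noncomputable def tFi [NeZero m] (A : Tensor m n) (i : Fin n) (x : Fin n → ℝ) : ℝ :=
  ∑ α : Fin m → Fin n, if α 0 = i then A α * ∏ k ∈ Finset.univ.erase (0 : Fin m), x (α k) else 0

/-- the constraint set -/
def tK (m n : ℕ) : Set (Fin n → ℝ) := {x | (∀ i, 0 ≤ x i) ∧ ∑ i, x i ^ m = 1}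

lemma tF_cont (A : Tensor m n) : Continuous (tF A) := by
  apply continuous_finset_sum
  intro α _
  exact continuous_const.mul (continuous_finset_prod _ fun k _ => continuous_apply _)

lemma tK_compact [NeZero m] [NeZero n] : IsCompact (tK m n) := by
  have hsub : tK m n ⊆ Set.Icc (fun _ => (0:ℝ)) (fun _ => (1:ℝ)) := by
    rintro x ⟨hx0, hx1⟩
    constructor
    · intro i; exact hx0 i
    · intro i
      have h1 : x i ^ m ≤ 1 := by
        rw [← hx1]
        exact Finset.single_le_sum (f := fun j => x j ^ m)
          (fun j _ => pow_nonneg (hx0 j) m) (mem_univ i)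
      by_contra hlt
      push_neg at hlt
      have : (1:ℝ) < x i ^ m := one_lt_pow₀ hlt (NeZero.ne m)
      linarith
  have hclosed : IsClosed (tK m n) := by
    have h1 : IsClosed {x : Fin n → ℝ | ∀ i, 0 ≤ x i} := by
      have : {x : Fin n → ℝ | ∀ i, 0 ≤ x i} = ⋂ i, {x | 0 ≤ x i} := by ext x; simp
      rw [this]
      exact isClosed_iInter fun i => isClosed_le continuous_const (continuous_apply i)
    have h2 : IsClosed {x : Fin n → ℝ | ∑ i, x i ^ m = 1} :=
      isClosed_eq (by continuity) continuous_const
    exact (h1.inter h2)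
  exact (isCompact_Icc).of_isClosed_subset hclosed hsub

lemma tK_nonempty [NeZero m] [NeZero n] : (tK m n).Nonempty := by
  classical
  refine ⟨fun i => if i = 0 then 1 else 0, fun i => by positivity, ?_⟩
  rw [Finset.sum_eq_single (0 : Fin n)]
  · simp [NeZero.ne m]
  · intro b _ hb; simp [hb, zero_pow (NeZero.ne m)]
  · simp

lemma tF_smul (A : Tensor m n) (c : ℝ) (x : Fin n → ℝ) :
    tF A (fun i => c * x i) = c ^ m * tF A x := by
  unfold tF
  rw [Finset.mul_sum]
  apply Finset.sum_congr rfl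
  intro α _
  rw [Finset.prod_mul_distrib]
  simp [Finset.prod_const]
  ring

lemma tF_nonneg (hA : ∀ α, 0 ≤ A α) (x : Fin n → ℝ) (hx : ∀ i, 0 ≤ x i) :
    0 ≤ tF A x :=
  Finset.sum_nonneg fun α _ => mul_nonneg (hA α) (Finset.prod_nonneg fun k _ => hx _)

/-- the key homogeneous bound: `F(z) ≤ ρ ∑ z_i^m` for `z ≥ 0` where `ρ` is the max on `tK` -/
lemma tF_le_bound [NeZero m] [NeZero n] {A : Tensor m n} (hA : ∀ α, 0 ≤ A α)
    {x₀ : Fin n → ℝ} (hx₀ : x₀ ∈ tK m n) (hmax : IsMaxOn (tF A) (tK m n) x₀)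
    (z : Fin n → ℝ) (hz : ∀ i, 0 ≤ z i) :
    tF A z ≤ tF A x₀ * ∑ i, z i ^ m := by
  set s := ∑ i, z i ^ m with hs
  have hs0 : 0 ≤ s := Finset.sum_nonneg fun i _ => pow_nonneg (hz i) m
  rcases eq_or_lt_of_le hs0 with h0 | hpos
  · -- s = 0 forces z = 0
    have hz0 : ∀ i, z i = 0 := by
      intro i
      have := (Finset.sum_eq_zero_iff_of_nonneg
        (fun j (_ : j ∈ Finset.univ) => pow_nonneg (hz j) m)).1 h0.symm i (mem_univ i)
      exact pow_eq_zero_iff (NeZero.ne m) |>.1 this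
    have : tF A z = 0 := by
      unfold tF
      apply Finset.sum_eq_zero
      intro α _
      rw [Finset.prod_eq_zero (Finset.mem_univ (0 : Fin m)) (hz0 _), mul_zero]
    rw [this, ← h0, mul_zero]
  · -- normalize
    have hm : (m : ℝ) ≠ 0 := Nat.cast_ne_zero.2 (NeZero.ne m)
    set c : ℝ := s ^ ((m : ℝ)⁻¹) with hc
    have hcpos : 0 < c := Real.rpow_pos_of_pos hpos _
    have hcm : c ^ m = s := by
      rw [hc, ← Real.rpow_natCast (s ^ ((m:ℝ)⁻¹)) m, ← Real.rpow_mul (le_of_lt hpos),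
        inv_mul_cancel₀ hm, Real.rpow_one]
    have hmem : (fun i => c⁻¹ * z i) ∈ tK m n := by
      constructor
      · intro i; exact mul_nonneg (le_of_lt (inv_pos.2 hcpos)) (hz i)
      · have : ∑ i, (c⁻¹ * z i) ^ m = (c⁻¹) ^ m * s := by
          rw [hs, Finset.mul_sum]
          exact Finset.sum_congr rfl fun i _ => mul_pow _ _ _
        rw [this, inv_pow, hcm]
        exact inv_mul_cancel₀ (by positivity)
    have hzc : z = fun i => c * (c⁻¹ * z i) := by
      funext i; rw [← mul_assoc, mul_inv_cancel₀ (ne_of_gt hcpos), one_mul]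
    calc tF A z = c ^ m * tF A (fun i => c⁻¹ * z i) := by rw [← tF_smul]; rw [← hzc]
    _ ≤ c ^ m * tF A x₀ := by
        apply mul_le_mul_of_nonneg_left (hmax hmem)
        positivity
    _ = tF A x₀ * s := by rw [hcm]; ring


/-- equality in the triangle inequality: every term is aligned with the sum. -/
lemma triangle_eq {ι : Type*} (s : Finset ι) (z : ι → ℂ)
    (h : ‖(∑ j ∈ s, z j)‖ = ∑ j ∈ s, ‖(z j)‖) :
    ∀ j ∈ s, z j * (‖(∑ i ∈ s, z i)‖ : ℂ)
      = (‖(z j)‖ : ℂ) * (∑ i ∈ s, z i) := by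
  classical
  set T := ∑ i ∈ s, z i with hT
  by_cases hT0 : T = 0
  · intro j hj
    have h0 : ∑ j ∈ s, ‖(z j)‖ = 0 := by rw [← h, hT0, norm_zero]
    have hz : ‖(z j)‖ = 0 :=
      (Finset.sum_eq_zero_iff_of_nonneg (fun i _ => norm_nonneg _)).1 h0 j hj
    rw [norm_eq_zero.1 hz]
    simp
  · -- pointwise real-part equality
    set c := (starRingEnd ℂ) T with hc
    have hcT : c * T = (‖T‖ : ℂ) ^ 2 := by
      rw [hc, mul_comm, Complex.mul_conj]
      norm_cast
      exact (Complex.sq_norm T).symm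
    have hre_le : ∀ j ∈ s, (c * z j).re ≤ ‖T‖ * ‖(z j)‖ := by
      intro j hj
      calc (c * z j).re ≤ ‖(c * z j)‖ := Complex.re_le_norm _
        _ = ‖T‖ * ‖(z j)‖ := by
          rw [norm_mul, hc, Complex.norm_conj]
    have hsum_re : ∑ j ∈ s, (c * z j).re = ∑ j ∈ s, ‖T‖ * ‖(z j)‖ := by
      have h1 : ∑ j ∈ s, (c * z j).re = (c * T).re := by
        rw [hT, Finset.mul_sum, Complex.re_sum]
      rw [h1, hcT, ← Finset.mul_sum, ← h]
      norm_cast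
      rw [sq]
    have hre_eq : ∀ j ∈ s, (c * z j).re = ‖T‖ * ‖(z j)‖ :=
      (Finset.sum_eq_sum_iff_of_le hre_le).1 hsum_re
    intro j hj
    -- from Re = abs we get c * z j is a nonneg real
    have habs : ‖(c * z j)‖ = (c * z j).re := by
      rw [hre_eq j hj, norm_mul, hc, Complex.norm_conj]
    have him : (c * z j).im = 0 := by
      have h1 : ‖(c * z j)‖ ^ 2 = (c * z j).re ^ 2 + (c * z j).im ^ 2 := by
        rw [Complex.sq_norm, Complex.normSq_apply]; ring
      rw [habs] at h1
      nlinarith [h1]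
    have hczj : c * z j = ((‖T‖ * ‖(z j)‖ : ℝ) : ℂ) := by
      apply Complex.ext
      · rw [hre_eq j hj]; norm_cast
      · rw [him]; norm_cast
    -- multiply by T
    have hTabs : (‖T‖ : ℂ) ≠ 0 := by
      simpa using (norm_ne_zero_iff.2 hT0)
    have key : T * (c * z j) = T * ((‖T‖ * ‖(z j)‖ : ℝ) : ℂ) := by
      rw [hczj]
    have h2 : (‖T‖ : ℂ)^2 * z j = (‖T‖ : ℂ) * ((‖(z j)‖ : ℂ) * T) := by
      calc (‖T‖ : ℂ)^2 * z j = (c * T) * z j := by rw [hcT]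
        _ = T * (c * z j) := by ring
        _ = T * ((‖T‖ * ‖(z j)‖ : ℝ) : ℂ) := key
        _ = (‖T‖ : ℂ) * ((‖(z j)‖ : ℂ) * T) := by push_cast; ring
    have h3 : (‖T‖ : ℂ) * (z j * (‖T‖ : ℂ))
        = (‖T‖ : ℂ) * ((‖(z j)‖ : ℂ) * T) := by
      rw [← h2]; ring
    exact mul_left_cancel₀ hTabs h3

/-- helper: rewriting `exp(x I)` as `exp(2πI s/m)` when `m x = 2πk` and `s ≡ k (mod m)`. -/
lemma exp_form {m : ℕ} (hm : m ≠ 0) (x : ℝ) (k t : ℤ) (s : ℕ)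
    (hx : (m:ℝ) * x = k * (2 * Real.pi)) (hs : (s:ℤ) = k + m * t) :
    Complex.exp ((x:ℂ) * Complex.I) = Complex.exp (2 * (Real.pi:ℂ) * Complex.I * ((s:ℂ)/(m:ℂ))) := by
  refine Complex.exp_eq_exp_iff_exists_int.2 ⟨-t, ?_⟩
  have hm0 : (m:ℂ) ≠ 0 := by exact_mod_cast hm
  have hxC : (m:ℂ) * (x:ℂ) = (k:ℂ) * (2 * (Real.pi:ℂ)) := by exact_mod_cast hx
  have hsC : (s:ℂ) = (k:ℂ) + (m:ℂ) * (t:ℂ) := by exact_mod_cast hs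
  field_simp
  push_cast
  linear_combination hxC - 2 * (Real.pi:ℂ) * hsC

/-- m-th roots of unity are `exp(2πI s/m)` with `1 ≤ s ≤ m`. -/
lemma root_extract {m : ℕ} (hm : m ≠ 0) (e : ℂ) (he : e ^ m = 1) :
    ∃ s : ℕ, 1 ≤ s ∧ s ≤ m ∧
      e = Complex.exp (2 * (Real.pi:ℂ) * Complex.I * (s / m)) := by
  classical
  have habs1 : ‖e‖ = 1 := by
    have h1 : ‖e‖ ^ m = 1 := by rw [← norm_pow, he, norm_one]
    have h2 := norm_nonneg e
    rcases lt_trichotomy (‖e‖) 1 with hlt | heq | hgt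
    · exact absurd h1 (by nlinarith [pow_lt_one₀ h2 hlt hm])
    · exact heq
    · exact absurd h1 (by nlinarith [one_lt_pow₀ hgt hm])
  have hexp : e = Complex.exp ((e.arg : ℂ) * Complex.I) := by
    conv_lhs => rw [← Complex.norm_mul_exp_arg_mul_I e]
    rw [habs1]
    simp
  have he2 : Complex.exp ((m:ℂ) * ((e.arg : ℂ) * Complex.I)) = 1 := by
    rw [Complex.exp_nat_mul, ← hexp, he]
  obtain ⟨k, hk⟩ := Complex.exp_eq_one_iff.1 he2
  have harg : (m:ℝ) * e.arg = k * (2 * Real.pi) := by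
    have h1 : ((m * e.arg : ℝ) : ℂ) * Complex.I = ((k * (2 * Real.pi) : ℝ) : ℂ) * Complex.I := by
      push_cast
      linear_combination hk
    have h2 := mul_right_cancel₀ Complex.I_ne_zero h1
    exact_mod_cast h2
  set r : ℤ := k % (m:ℤ) with hrdef
  have hmZ : (0:ℤ) < (m:ℤ) := by exact_mod_cast Nat.pos_of_ne_zero hm
  have hr0 : 0 ≤ r := Int.emod_nonneg k (ne_of_gt hmZ)
  have hrm : r < (m:ℤ) := Int.emod_lt_of_pos k hmZ
  have hdm : (m:ℤ) * (k / (m:ℤ)) + r = k := Int.mul_ediv_add_emod k (m:ℤ)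
  set κ : ℤ := k / (m:ℤ) with hκdef
  by_cases hr : r = 0
  · refine ⟨m, Nat.one_le_iff_ne_zero.2 hm, le_refl m, ?_⟩
    rw [hexp]
    exact exp_form hm e.arg k (1 - κ) m harg (by push_cast; linear_combination hdm - hr)
  · refine ⟨r.toNat, ?_, ?_, ?_⟩
    · omega
    · omega
    · rw [hexp]
      exact exp_form hm e.arg k (-κ) r.toNat harg (by push_cast [Int.toNat_of_nonneg hr0]; linear_combination hdm)

/-- final modular arithmetic -/
lemma mod_arith {m ℓ : ℕ} (hm : m ≠ 0) (hℓ : 2 ≤ ℓ) (S : ℕ) (hS : m ≤ S)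
    (h : Complex.exp (2 * (Real.pi:ℂ) * Complex.I * ((S:ℂ) / (m:ℂ)))
       = Complex.exp (2 * (Real.pi:ℂ) * Complex.I / (ℓ:ℂ))) :
    S ≡ m / ℓ [MOD m] := by
  obtain ⟨t, ht⟩ := Complex.exp_eq_exp_iff_exists_int.1 h
  have hm0 : (m:ℂ) ≠ 0 := by exact_mod_cast hm
  have hl0 : (ℓ:ℂ) ≠ 0 := by
    have : ℓ ≠ 0 := by omega
    exact_mod_cast this
  have h2 : ((S:ℂ)/(m:ℂ) - 1/(ℓ:ℂ) - (t:ℂ)) * (2 * (Real.pi:ℂ) * Complex.I) = 0 := by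
    field_simp at ht ⊢
    linear_combination (2 * (Real.pi:ℂ) * Complex.I) * ht
  have h2pi : (2 * (Real.pi:ℂ) * Complex.I) ≠ 0 := by
    simp [Real.pi_ne_zero, Complex.I_ne_zero]
  have h3 : (S:ℂ)/(m:ℂ) - 1/(ℓ:ℂ) - (t:ℂ) = 0 := by
    rcases mul_eq_zero.1 h2 with h | h
    · exact h
    · exact absurd h h2pi
  have h4 : (S:ℂ) * ℓ = (m:ℂ) + (t:ℂ) * m * ℓ := by
    field_simp at h3
    linear_combination h3
  have hZ : (S:ℤ) * ℓ = (m:ℤ) + t * m * ℓ := by exact_mod_cast h4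
  set r : ℤ := (S:ℤ) - t * m with hrdef
  have hr : (m:ℤ) = ℓ * r := by rw [hrdef]; linear_combination -hZ
  have hℓZ : (2:ℤ) ≤ (ℓ:ℤ) := by exact_mod_cast hℓ
  have hmZ : (1:ℤ) ≤ (m:ℤ) := by exact_mod_cast Nat.one_le_iff_ne_zero.2 hm
  have hr1 : 1 ≤ r := by nlinarith
  have hrm : r < (m:ℤ) := by nlinarith
  have hNat : m = ℓ * r.toNat := by
    have : (m:ℤ) = (ℓ:ℤ) * (r.toNat : ℤ) := by rw [Int.toNat_of_nonneg (by omega)]; exact hr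
    exact_mod_cast this
  have hdiv : m / ℓ = r.toNat := by
    rw [hNat, Nat.mul_div_cancel_left _ (by omega : 0 < ℓ)]
  rw [hdiv]
  -- S ≡ r.toNat [MOD m]
  have ht0 : 0 ≤ t := by nlinarith
  have hle : r.toNat ≤ S := by omega
  refine Nat.ModEq.symm ((Nat.modEq_iff_dvd' hle).2 ⟨t.toNat, ?_⟩)
  have h5 : ((S - r.toNat : ℕ) : ℤ) = (m:ℤ) * t.toNat := by
    rw [Nat.cast_sub hle, Int.toNat_of_nonneg ht0, Int.toNat_of_nonneg (by omega : (0:ℤ) ≤ r)]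
    linarith [hrdef]
  exact_mod_cast h5


-- crossing lemma
lemma crossing {α : Type*} {r : α → α → Prop} {P : α → Prop} :
    ∀ {a b : α}, Relation.ReflTransGen r a b → P a → ¬ P b →
      ∃ p q, P p ∧ ¬ P q ∧ r p q := by
  intro a b h
  induction h with
  | refl => intro hPa hPb; exact absurd hPa hPb
  | @tail b c _ hbc ih =>
    intro hPa hPc
    by_cases hPb : P b
    · exact ⟨b, c, hPb, hPc, hbc⟩
    · exact ih hPa hPb


lemma maxOn_pos [NeZero m] [NeZero n] (hm : 2 ≤ m) {A : Tensor m n} (hA : ∀ α, 0 ≤ A α)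
    (hirr : A.WeaklyIrreducible)
    {x : Fin n → ℝ} (hx : x ∈ tK m n) (hmax : IsMaxOn (tF A) (tK m n) x) :
    ∀ i, 0 < x i := by
  classical
  obtain ⟨hx0, hx1⟩ := hx
  by_contra hcon
  push_neg at hcon
  obtain ⟨i₀, hi₀⟩ := hcon
  have hxi₀ : x i₀ = 0 := le_antisymm hi₀ (hx0 i₀)
  -- there is a coordinate with x u ≠ 0
  have hu : ∃ u, x u ≠ 0 := by
    by_contra hall
    push_neg at hall
    rw [Finset.sum_eq_zero (fun i _ => by rw [hall i, zero_pow (NeZero.ne m)])] at hx1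
    exact one_ne_zero hx1.symm
  obtain ⟨u, hu⟩ := hu
  -- crossing arc
  obtain ⟨p, q, hp, hq, harc⟩ := crossing (P := fun i => x i ≠ 0) (hirr u i₀) hu (by simpa using hxi₀)
  push_neg at hq
  obtain ⟨α₀, hα₀, hα₀0, k₀, hk₀, hα₀k₀⟩ := harc
  have hxp : 0 < x p := lt_of_le_of_ne (hx0 p) (Ne.symm hp)
  -- constants
  set ρ := tF A x with hρ
  have hρ0 : 0 ≤ ρ := Finset.sum_nonneg fun α _ =>
    mul_nonneg (hA α) (Finset.prod_nonneg fun k _ => hx0 _)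
  set w : Fin m → ℝ := fun k => if x (α₀ k) = 0 then 1 else x (α₀ k) with hw
  have hwpos : ∀ k, 0 < w k := by
    intro k; by_cases h : x (α₀ k) = 0 <;> simp [hw, h]
    exact lt_of_le_of_ne (hx0 _) (Ne.symm h)
  set c := A α₀ * (x p * ∏ k ∈ Finset.univ.erase (0 : Fin m), w k) with hc
  have hcpos : 0 < c := by
    apply mul_pos (lt_of_le_of_ne (hA α₀) (Ne.symm hα₀))
    exact mul_pos hxp (Finset.prod_pos fun k _ => hwpos k)
  set N := (Finset.univ.filter (fun i => x i = 0)).card with hN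
  -- choose ε
  set D := ρ * N + 1 with hD
  have hDpos : 0 < D := by positivity
  set ε := min 1 (c / D) with hε
  have hεpos : 0 < ε := lt_min one_pos (div_pos hcpos hDpos)
  have hε1 : ε ≤ 1 := min_le_left _ _
  have hεD : ε ≤ c / D := min_le_right _ _
  -- perturbed vector
  set z : Fin n → ℝ := fun j => if x j = 0 then ε else x j with hz
  have hznn : ∀ j, 0 ≤ z j := by
    intro j; by_cases h : x j = 0 <;> simp [hz, h]
    exacts [le_of_lt hεpos, hx0 j]
  have hzx : ∀ j, x j ≤ z j := by
    intro j; by_cases h : x j = 0 <;> simp [hz, h, le_of_lt hεpos]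
  -- lower bound for tF A z
  have hgain : ρ + c * ε ^ (m - 1) ≤ tF A z := by
    have hterm : ∀ α, A α * ∏ k, x (α k) ≤ A α * ∏ k, z (α k) := fun α =>
      mul_le_mul_of_nonneg_left
        (Finset.prod_le_prod (fun k _ => hx0 _) (fun k _ => hzx _)) (hA α)
    have hprodx : A α₀ * ∏ k, x (α₀ k) = 0 := by
      rw [Finset.prod_eq_zero (Finset.mem_univ k₀) (by rw [hα₀k₀, hq]), mul_zero]
    have hprodz : c * ε ^ (m - 1) ≤ A α₀ * ∏ k, z (α₀ k) := by
      have h1 : ∏ k, z (α₀ k) = z (α₀ 0) * ∏ k ∈ Finset.univ.erase (0 : Fin m), z (α₀ k) :=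
        (Finset.mul_prod_erase _ _ (Finset.mem_univ _)).symm
      have h2 : z (α₀ 0) = x p := by rw [hα₀0]; simp [hz, hp]
      have h3 : ∀ k ∈ Finset.univ.erase (0 : Fin m), ε * w k ≤ z (α₀ k) := by
        intro k _
        by_cases h : x (α₀ k) = 0
        · simp [hz, hw, h]
        · simp only [hz, hw, if_neg h]
          nlinarith [lt_of_le_of_ne (hx0 (α₀ k)) (Ne.symm h)]
      have h4 : ∏ k ∈ Finset.univ.erase (0 : Fin m), (ε * w k) ≤
          ∏ k ∈ Finset.univ.erase (0 : Fin m), z (α₀ k) :=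
        Finset.prod_le_prod (fun k _ => mul_nonneg (le_of_lt hεpos) (le_of_lt (hwpos k)))
          h3
      have h5 : ∏ k ∈ Finset.univ.erase (0 : Fin m), (ε * w k)
          = ε ^ (m - 1) * ∏ k ∈ Finset.univ.erase (0 : Fin m), w k := by
        rw [Finset.prod_mul_distrib, Finset.prod_const]
        congr 2
        rw [Finset.card_erase_of_mem (Finset.mem_univ _), Finset.card_univ, Fintype.card_fin]
      calc c * ε ^ (m - 1)
          = A α₀ * (x p * (ε ^ (m-1) * ∏ k ∈ Finset.univ.erase (0 : Fin m), w k)) := by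
            rw [hc]; ring
        _ ≤ A α₀ * (x p * ∏ k ∈ Finset.univ.erase (0 : Fin m), z (α₀ k)) := by
            apply mul_le_mul_of_nonneg_left _ (hA α₀)
            apply mul_le_mul_of_nonneg_left _ (le_of_lt hxp)
            rw [← h5]; exact h4
        _ = A α₀ * ∏ k, z (α₀ k) := by rw [h1, h2]
    have hsplitz : tF A z = (∑ α ∈ Finset.univ.erase α₀, A α * ∏ k, z (α k))
        + A α₀ * ∏ k, z (α₀ k) := by
      rw [tF, Finset.sum_erase_add _ _ (Finset.mem_univ α₀)]
    have hsplitx : ρ = (∑ α ∈ Finset.univ.erase α₀, A α * ∏ k, x (α k))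
        + A α₀ * ∏ k, x (α₀ k) := by
      rw [hρ, tF, Finset.sum_erase_add _ _ (Finset.mem_univ α₀)]
    calc ρ + c * ε ^ (m - 1)
        = (∑ α ∈ Finset.univ.erase α₀, A α * ∏ k, x (α k)) + c * ε ^ (m - 1) := by
          rw [hsplitx, hprodx, add_zero]
      _ ≤ (∑ α ∈ Finset.univ.erase α₀, A α * ∏ k, z (α k)) + A α₀ * ∏ k, z (α₀ k) :=
          add_le_add (Finset.sum_le_sum fun α _ => hterm α) hprodz
      _ = tF A z := hsplitz.symm
  -- upper bound
  have hsum : ∑ j, z j ^ m = 1 + N * ε ^ m := by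
    have : ∀ j, z j ^ m = x j ^ m + (if x j = 0 then ε ^ m else 0) := by
      intro j
      by_cases h : x j = 0 <;> simp [hz, h, zero_pow (NeZero.ne m)]
    have hiteN : (∑ j : Fin n, if x j = 0 then ε ^ m else 0) = N * ε ^ m := by
      rw [← Finset.sum_filter, Finset.sum_const, nsmul_eq_mul]
    rw [Finset.sum_congr rfl (fun j _ => this j), Finset.sum_add_distrib, hx1, hiteN]
  -- contradiction
  have hub : tF A z ≤ ρ * (1 + N * ε ^ m) := by
    have h := tF_le_bound hA ⟨hx0, hx1⟩ hmax z hznn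
    rw [hsum] at h
    exact h
  have key : c * ε ^ (m - 1) ≤ ρ * N * ε ^ m := by linarith
  have hm0 : 0 < m := by omega
  have hm1 : m - 1 + 1 = m := Nat.succ_pred_eq_of_pos hm0
  have hεm : ε ^ m = ε ^ (m - 1) * ε := by
    conv_lhs => rw [← hm1]
    rw [pow_succ]
  have hE : 0 < ε ^ (m - 1) := pow_pos hεpos _
  have key2 : c ≤ ρ * N * ε := by
    have : c * ε ^ (m - 1) ≤ (ρ * N * ε) * ε ^ (m - 1) := by
      calc c * ε ^ (m - 1) ≤ ρ * N * ε ^ m := key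
        _ = (ρ * N * ε) * ε ^ (m - 1) := by rw [hεm]; ring
    exact le_of_mul_le_mul_right this hE
  have h6 : c ≤ ρ * N * (c / D) :=
    le_trans key2 (mul_le_mul_of_nonneg_left hεD (mul_nonneg hρ0 (Nat.cast_nonneg N)))
  have h7 : c * D ≤ ρ * N * c := by
    have h := mul_le_mul_of_nonneg_right h6 (le_of_lt hDpos)
    calc c * D ≤ ρ * N * (c / D) * D := h
      _ = ρ * ↑N * c := by rw [mul_assoc, div_mul_cancel₀ _ (ne_of_gt hDpos)]
  rw [hD] at h7
  nlinarith


/-- For each fixed slot `k`, the slot-`k` contraction equals the slot-`0` one, by symmetry. -/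
lemma slot_sum_eq [NeZero m] {A : Tensor m n} (hsymm : A.Symm) (i : Fin n) (x : Fin n → ℝ)
    (k : Fin m) :
    ∑ α : Fin m → Fin n, (if α k = i then A α * ∏ j ∈ Finset.univ.erase k, x (α j) else 0)
      = tFi A i x := by
  classical
  rw [tFi]
  set σ : Equiv.Perm (Fin m) := Equiv.swap 0 k with hσ
  have himg : (Finset.univ.erase k).image σ = Finset.univ.erase 0 := by
    rw [Finset.image_erase σ.injective]
    have h1 : (Finset.univ : Finset (Fin m)).image σ = Finset.univ :=
      Finset.image_univ_of_surjective σ.surjective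
    rw [h1, hσ, Equiv.swap_apply_right]
  refine (Fintype.sum_equiv (Equiv.arrowCongr σ.symm (Equiv.refl (Fin n)))
    _ _ ?_).symm
  intro α
  have heval : ∀ j, (Equiv.arrowCongr σ.symm (Equiv.refl (Fin n))) α j = α (σ j) := by
    intro j; simp [Equiv.arrowCongr]
  have hcomp : (Equiv.arrowCongr σ.symm (Equiv.refl (Fin n))) α = α ∘ σ := funext heval
  rw [hcomp]
  have hk : (α ∘ σ) k = α 0 := by
    simp [Function.comp, hσ, Equiv.swap_apply_right]
  rw [hk]
  by_cases hcase : α 0 = i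
  · rw [if_pos hcase, if_pos hcase]
    congr 1
    · exact (hsymm σ α).symm
    · rw [← himg, Finset.prod_image (fun a _ b _ h => σ.injective h)]
      rfl
  · rw [if_neg hcase, if_neg hcase]

/-- derivative identity: `∑_α A_α ∑_k [α_k = i] ∏_{j≠k} x_{α_j} = m ⬝ (A x^{m-1})_i`. -/
lemma deriv_identity [NeZero m] {A : Tensor m n} (hsymm : A.Symm) (i : Fin n) (x : Fin n → ℝ) :
    ∑ α : Fin m → Fin n, A α *
        ∑ k : Fin m, (∏ j ∈ Finset.univ.erase k, x (α j)) * (if α k = i then (1:ℝ) else 0)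
      = m * tFi A i x := by
  classical
  have h1 : ∀ α : Fin m → Fin n, A α *
      ∑ k : Fin m, (∏ j ∈ Finset.univ.erase k, x (α j)) * (if α k = i then (1:ℝ) else 0)
      = ∑ k : Fin m, (if α k = i then A α * ∏ j ∈ Finset.univ.erase k, x (α j) else 0) := by
    intro α
    rw [Finset.mul_sum]
    apply Finset.sum_congr rfl
    intro k _
    by_cases h : α k = i <;> simp [h]
  rw [Finset.sum_congr rfl (fun α _ => h1 α), Finset.sum_comm]
  rw [Finset.sum_congr rfl (fun k _ => slot_sum_eq hsymm i x k)]
  rw [Finset.sum_const, Finset.card_univ, Fintype.card_fin, nsmul_eq_mul]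

/-- at a positive maximizer the eigenvalue equations hold -/
lemma eig_at_max [NeZero m] [NeZero n] {A : Tensor m n} (hsymm : A.Symm) (hA : ∀ α, 0 ≤ A α)
    {x : Fin n → ℝ} (hx : x ∈ tK m n) (hmax : IsMaxOn (tF A) (tK m n) x)
    (hpos : ∀ i, 0 < x i) (i : Fin n) :
    tFi A i x = tF A x * x i ^ (m - 1) := by
  classical
  set ρ := tF A x with hρ
  set ind : Fin n → ℝ := fun j => if j = i then 1 else 0 with hind
  set g : ℝ → ℝ := fun t =>
    tF A (fun j => x j + t * ind j) - ρ * ∑ j, (x j + t * ind j) ^ m with hg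
  -- local max at 0
  have hloc : IsLocalMax g 0 := by
    have hsub : Set.Ioo (-(x i)) (x i) ∈ nhds (0:ℝ) :=
      Ioo_mem_nhds (neg_lt_zero.2 (hpos i)) (hpos i)
    apply Filter.eventually_of_mem hsub
    intro t ht
    have hznn : ∀ j, 0 ≤ x j + t * ind j := by
      intro j
      by_cases h : j = i
      · subst h; simp only [hind, if_pos rfl, mul_one]; linarith [ht.1]
      · simp only [hind, if_neg h, mul_zero, add_zero]; exact le_of_lt (hpos j)
    have hb := tF_le_bound hA hx hmax (fun j => x j + t * ind j) hznn
    have h0 : g 0 = 0 := by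
      simp only [hg, zero_mul, add_zero]
      rw [hx.2]
      ring
    rw [h0]
    simp only [hg]
    linarith [hb]
  -- derivative of g at 0
  have hder : HasDerivAt g
      ((∑ α : Fin m → Fin n, A α *
          ∑ k : Fin m, (∏ j ∈ Finset.univ.erase k, x (α j)) * ind (α k))
        - ρ * ∑ j, ((m : ℝ) * x j ^ (m-1) * ind j)) 0 := by
    apply HasDerivAt.sub
    · -- tF part
      have hα : ∀ α : Fin m → Fin n, HasDerivAt
          (fun t => A α * ∏ k : Fin m, (x (α k) + t * ind (α k)))
          (A α * ∑ k : Fin m, (∏ j ∈ Finset.univ.erase k, x (α j)) * ind (α k)) 0 := by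
        intro α
        apply HasDerivAt.const_mul
        have := HasDerivAt.fun_finsetProd (u := (Finset.univ : Finset (Fin m)))
          (f := fun k t => x (α k) + t * ind (α k)) (f' := fun k => ind (α k)) (x := (0:ℝ))
          (fun k _ => by
            simpa using ((hasDerivAt_mul_const (ind (α k))).const_add (x (α k))))
        simpa using this
      have := HasDerivAt.fun_sum (u := (Finset.univ : Finset (Fin m → Fin n)))
        (fun α _ => hα α)
      simpa [tF] using this
    · -- power part
      apply HasDerivAt.const_mul
      have hj : ∀ j : Fin n, HasDerivAt (fun t => (x j + t * ind j) ^ m)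
          ((m : ℝ) * x j ^ (m-1) * ind j) 0 := by
        intro j
        have h := ((hasDerivAt_mul_const (x := (0:ℝ)) (ind j)).const_add (x j)).fun_pow m
        simpa using h
      exact HasDerivAt.fun_sum (fun j _ => hj j)
  have hder0 : deriv g 0 = _ := hder.deriv
  have hzero := hloc.deriv_eq_zero
  rw [hder0] at hzero
  -- simplify the indicator sums
  have hs1 : ∑ j, ((m : ℝ) * x j ^ (m-1) * ind j) = m * x i ^ (m-1) := by
    rw [Finset.sum_eq_single i]
    · simp [hind]
    · intro b _ hb; simp [hind, hb]
    · simp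
  rw [hs1, deriv_identity hsymm i x] at hzero
  have hmne : (m : ℝ) ≠ 0 := Nat.cast_ne_zero.2 (NeZero.ne m)
  have h2 : (m : ℝ) * tFi A i x = (m : ℝ) * (ρ * x i ^ (m-1)) := by linarith
  exact mul_left_cancel₀ hmne h2


end PFaux

open PFaux Finset

set_option maxHeartbeats 2000000

/-- a symmetric weakly irreducible nonnegative tensor of order `m` and
dimension `n` that is spectral `ℓ`-symmetric (`ℓ ≥ 2`) is `(m,ℓ)`-colorable. -/

theorem stmt7 {m n ℓ : ℕ} [NeZero m] [NeZero n] (hℓ : 2 ≤ ℓ) (A : Tensor m n)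
    (hsymm : A.Symm) (hA : A.Nonneg) (hirr : A.WeaklyIrreducible)
    (hsym : A.SpectralSym ℓ) :
    ∃ φ : Fin n → ℕ, (∀ v, 1 ≤ φ v ∧ φ v ≤ m) ∧
      ∀ α : Fin m → Fin n, A α ≠ 0 → (∑ k : Fin m, φ (α k)) ≡ m / ℓ [MOD m] := by
  classical
  by_cases hm1 : m = 1
  · subst hm1
    exact ⟨fun _ => 1, fun v => ⟨le_refl 1, le_refl 1⟩, fun α _ => Nat.modEq_one⟩
  have hm : 2 ≤ m := by have := NeZero.ne m; omega
  by_cases hA0 : ∀ α, A α = 0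
  · exact ⟨fun _ => 1, fun v => ⟨le_refl 1, show (1:ℕ) ≤ m by omega⟩, fun α hα => absurd (hA0 α) hα⟩
  push_neg at hA0
  obtain ⟨α₀, hα₀⟩ := hA0
  -- Perron maximizer
  obtain ⟨x, hxK, hmax⟩ := (tK_compact (m := m) (n := n)).exists_isMaxOn (tK_nonempty (m := m) (n := n)) (tF_cont A).continuousOn
  have hxpos := maxOn_pos hm hA hirr hxK hmax
  set ρ : ℝ := tF A x with hρdef
  have hρpos : 0 < ρ := by
    have h1 : A α₀ * ∏ k, x (α₀ k) ≤ tF A x := by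
      rw [tF]
      exact Finset.single_le_sum
        (f := fun α => A α * ∏ k, x (α k))
        (fun α _ => mul_nonneg (hA α) (Finset.prod_nonneg fun k _ => le_of_lt (hxpos _)))
        (mem_univ α₀)
    have h2 : 0 < A α₀ * ∏ k, x (α₀ k) :=
      mul_pos (lt_of_le_of_ne (hA α₀) (Ne.symm hα₀)) (Finset.prod_pos fun k _ => hxpos _)
    exact lt_of_lt_of_le h2 h1
  have heig := eig_at_max hsymm hA hxK hmax hxpos
  -- cast to ℂ : ρ is an eigenvalue
  have cast1 : ∀ (u : Fin n → ℝ) (i : Fin n), ((tFi A i u : ℝ) : ℂ)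
      = ∑ α : Fin m → Fin n,
          if α 0 = i then (A α : ℂ) * ∏ k ∈ Finset.univ.erase (0 : Fin m), ((u (α k) : ℝ) : ℂ)
          else 0 := by
    intro u i
    rw [tFi]
    push_cast [apply_ite (fun r : ℝ => (r : ℂ))]
    rfl
  have hEig : A.IsEig (ρ : ℂ) := by
    refine ⟨fun i => (x i : ℂ), ?_, ?_⟩
    · intro h
      have h0 : ((x 0 : ℝ) : ℂ) = 0 := congrFun h 0
      rw [Complex.ofReal_eq_zero] at h0
      exact absurd h0 (ne_of_gt (hxpos 0))
    · intro i
      rw [← cast1 x i, heig i]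
      push_cast
      ring
  obtain ⟨y, hy0, hyE⟩ := (hsym (ρ : ℂ)).1 hEig
  -- absolute values
  set β : Fin n → ℝ := fun i => ‖(y i)‖ with hβdef
  have hβnn : ∀ i, 0 ≤ β i := fun i => norm_nonneg _
  have hrotabs : ‖(rot ℓ)‖ = 1 := by
    rw [rot, show 2 * (Real.pi:ℂ) * Complex.I / (ℓ:ℂ) = ((2 * Real.pi / ℓ : ℝ) : ℂ) * Complex.I
      from by push_cast; ring, Complex.norm_exp_ofReal_mul_I]
  have hrot0 : rot ℓ ≠ 0 := Complex.exp_ne_zero _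
  -- the summands and their absolute values
  set z : Fin n → (Fin m → Fin n) → ℂ := fun i γ =>
    if γ 0 = i then (A γ : ℂ) * ∏ k ∈ Finset.univ.erase (0 : Fin m), y (γ k) else 0 with hzdef
  have habs_te : ∀ i γ, ‖(z i γ)‖
      = if γ 0 = i then A γ * ∏ k ∈ Finset.univ.erase (0 : Fin m), β (γ k) else 0 := by
    intro i γ
    simp only [hzdef]
    by_cases h : γ 0 = i
    · rw [if_pos h, if_pos h, norm_mul, Complex.norm_real, Real.norm_eq_abs, abs_of_nonneg (hA γ), norm_prod]
    · rw [if_neg h, if_neg h, norm_zero]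
  have habsT : ∀ i, ‖((rot ℓ * (ρ:ℂ)) * y i ^ (m-1))‖ = ρ * β i ^ (m-1) := by
    intro i
    rw [norm_mul, norm_mul, hrotabs, norm_pow, Complex.norm_real, Real.norm_eq_abs,
      abs_of_nonneg (le_of_lt hρpos), one_mul]
  have hpt : ∀ i, ρ * β i ^ (m-1) ≤ tFi A i β := by
    intro i
    calc ρ * β i ^ (m-1) = ‖((rot ℓ * (ρ:ℂ)) * y i ^ (m-1))‖ := (habsT i).symm
      _ = ‖(∑ γ : Fin m → Fin n, z i γ)‖ := by rw [hyE i]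
      _ ≤ ∑ γ : Fin m → Fin n, ‖(z i γ)‖ := norm_sum_le _ _
      _ = tFi A i β := by
          rw [tFi]
          exact Finset.sum_congr rfl fun γ _ => habs_te i γ
  -- contraction identity
  have hFβ : ∑ i, β i * tFi A i β = tF A β := by
    have h1 : ∀ i, β i * tFi A i β = ∑ γ : Fin m → Fin n,
        if γ 0 = i then β i * (A γ * ∏ k ∈ Finset.univ.erase (0 : Fin m), β (γ k)) else 0 := by
      intro i
      rw [tFi, Finset.mul_sum]
      exact Finset.sum_congr rfl fun γ _ => by
        by_cases h : γ 0 = i <;> simp [h]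
    rw [Finset.sum_congr rfl fun i _ => h1 i, Finset.sum_comm, tF]
    apply Finset.sum_congr rfl
    intro γ _
    have h2 : ∀ i, (if γ 0 = i then β i * (A γ * ∏ k ∈ Finset.univ.erase (0 : Fin m), β (γ k)) else 0)
        = if γ 0 = i then β (γ 0) * (A γ * ∏ k ∈ Finset.univ.erase (0 : Fin m), β (γ k)) else 0 := by
      intro i; by_cases h : γ 0 = i
      · rw [if_pos h, if_pos h, h]
      · rw [if_neg h, if_neg h]
    rw [Finset.sum_congr rfl fun i _ => h2 i, Finset.sum_ite_eq, if_pos (mem_univ _)]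
    rw [← Finset.mul_prod_erase Finset.univ (fun k => β (γ k)) (Finset.mem_univ (0 : Fin m))]
    ring
  have hup : tF A β ≤ ρ * ∑ i, β i ^ m := tF_le_bound hA hxK hmax β hβnn
  have hm1' : m - 1 + 1 = m := by omega
  have hβpow : ∀ i, β i ^ m = β i ^ (m-1) * β i := by
    intro i; conv_lhs => rw [← hm1']
    rw [pow_succ]
  have hlow : ρ * ∑ i, β i ^ m ≤ ∑ i, β i * tFi A i β := by
    rw [Finset.mul_sum]
    apply Finset.sum_le_sum
    intro i _
    calc ρ * β i ^ m = β i * (ρ * β i ^ (m-1)) := by rw [hβpow]; ring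
      _ ≤ β i * tFi A i β := mul_le_mul_of_nonneg_left (hpt i) (hβnn i)
  have hEq : ∑ i, β i * tFi A i β = ρ * ∑ i, β i ^ m := le_antisymm (hFβ ▸ hup) hlow
  -- β is positive : it normalizes to a maximizer
  have hs : 0 < ∑ i, β i ^ m := by
    obtain ⟨j, hj⟩ := Function.ne_iff.1 hy0
    apply Finset.sum_pos' (fun i _ => pow_nonneg (hβnn i) m) ⟨j, mem_univ j, ?_⟩
    have : 0 < β j := norm_pos_iff.2 hj
    positivity
  have hFβval : tF A β = ρ * ∑ i, β i ^ m := by rw [← hFβ, hEq]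
  have hβpos : ∀ i, 0 < β i := by
    have hmR : ((m:ℝ)) ≠ 0 := Nat.cast_ne_zero.2 (NeZero.ne m)
    set s' := ∑ i, β i ^ m with hs'def
    set c : ℝ := s' ^ ((m:ℝ)⁻¹) with hcdef
    have hcpos : 0 < c := Real.rpow_pos_of_pos hs _
    have hcm : c ^ m = s' := by
      rw [hcdef, ← Real.rpow_natCast (s' ^ ((m:ℝ)⁻¹)) m, ← Real.rpow_mul (le_of_lt hs),
        inv_mul_cancel₀ hmR, Real.rpow_one]
    set w : Fin n → ℝ := fun i => c⁻¹ * β i with hwdef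
    have hwK : w ∈ tK m n := by
      constructor
      · intro i; exact mul_nonneg (le_of_lt (inv_pos.2 hcpos)) (hβnn i)
      · have : ∑ i, w i ^ m = (c⁻¹) ^ m * s' := by
          rw [hs'def, Finset.mul_sum]
          exact Finset.sum_congr rfl fun i _ => mul_pow _ _ _
        rw [this, inv_pow, hcm]
        exact inv_mul_cancel₀ (by positivity)
    have hwval : tF A w = ρ := by
      rw [hwdef, tF_smul, hFβval, inv_pow, hcm]
      field_simp
    have hwmax : IsMaxOn (tF A) (tK m n) w := by
      intro v hv
      have h1 := tF_le_bound hA hxK hmax v hv.1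
      rw [hv.2, mul_one] at h1
      simpa [hwval] using h1
    have hwpos := maxOn_pos hm hA hirr hwK hwmax
    intro i
    have := hwpos i
    have h2 : β i = c * w i := by
      rw [hwdef, ← mul_assoc, mul_inv_cancel₀ (ne_of_gt hcpos), one_mul]
    rw [h2]
    exact mul_pos hcpos (hwpos i)
  -- per-coordinate equality
  have hsum0 : ∑ i, (β i * tFi A i β - ρ * β i ^ m) = 0 := by
    rw [Finset.sum_sub_distrib, ← Finset.mul_sum, hEq, sub_self]
  have hnn : ∀ i ∈ (Finset.univ : Finset (Fin n)), 0 ≤ β i * tFi A i β - ρ * β i ^ m := by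
    intro i _
    have h3 : ρ * β i ^ m = β i * (ρ * β i ^ (m-1)) := by rw [hβpow]; ring
    have h4 := mul_le_mul_of_nonneg_left (hpt i) (hβnn i)
    linarith
  have hterm0 := (Finset.sum_eq_zero_iff_of_nonneg hnn).1 hsum0
  have hFi_eq : ∀ i, tFi A i β = ρ * β i ^ (m-1) := by
    intro i
    have h1 := hterm0 i (mem_univ i)
    have h2 : β i * tFi A i β = β i * (ρ * β i ^ (m-1)) := by
      rw [hβpow] at h1
      linarith [h1]
    exact mul_left_cancel₀ (ne_of_gt (hβpos i)) h2
  -- phases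
  set d : Fin n → ℂ := fun j => y j / (β j : ℂ) with hddef
  have hβC0 : ∀ j, (β j : ℂ) ≠ 0 := fun j => by
    exact_mod_cast ne_of_gt (hβpos j)
  have hy0' : ∀ j, y j ≠ 0 := fun j h => by
    have := hβpos j
    rw [hβdef] at this
    simp only [h, norm_zero] at this
    exact lt_irrefl 0 this
  have hd0 : ∀ j, d j ≠ 0 := fun j => div_ne_zero (hy0' j) (hβC0 j)
  have hρC0 : ((ρ:ℝ):ℂ) ≠ 0 := by exact_mod_cast ne_of_gt hρpos
  -- alignment from equality in the triangle inequality
  have hyE' : ∀ i, ∑ δ : Fin m → Fin n, z i δ = (rot ℓ * (ρ:ℂ)) * y i ^ (m-1) := by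
    intro i
    simp only [hzdef]
    exact hyE i
  have halign : ∀ γ : Fin m → Fin n, A γ ≠ 0 →
      ∏ k ∈ Finset.univ.erase (0 : Fin m), d (γ k) = rot ℓ * d (γ 0) ^ (m-1) := by
    intro γ hγ
    set i := γ 0 with hidef
    have habs_eq : ‖(∑ δ : Fin m → Fin n, z i δ)‖
        = ∑ δ : Fin m → Fin n, ‖(z i δ)‖ := by
      rw [hyE' i, habsT i]
      rw [Finset.sum_congr rfl fun δ _ => habs_te i δ]
      rw [← tFi, hFi_eq i]
    have htri := triangle_eq Finset.univ (z i) habs_eq γ (mem_univ γ)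
    rw [hyE' i, habsT i] at htri
    have hzγ : z i γ = (A γ : ℂ) * ∏ k ∈ Finset.univ.erase (0 : Fin m), y (γ k) := by
      simp only [hzdef, ← hidef, if_pos rfl, ↓reduceIte]
    have hzγab : (‖(z i γ)‖ : ℂ)
        = (A γ : ℂ) * ∏ k ∈ Finset.univ.erase (0 : Fin m), (β (γ k) : ℂ) := by
      rw [habs_te i γ, ← hidef, if_pos rfl]
      push_cast
      ring
    rw [hzγab, hzγ] at htri
    -- now htri : (Aγ * ∏ y) * ↑(ρ * β i ^(m-1)) = (Aγ * ∏ β) * (rot ℓ * ρ * y i^(m-1))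
    have hAC0 : (A γ : ℂ) ≠ 0 := by exact_mod_cast hγ
    have hPβ0 : (∏ k ∈ Finset.univ.erase (0 : Fin m), (β (γ k) : ℂ)) ≠ 0 :=
      Finset.prod_ne_zero_iff.2 fun k _ => hβC0 _
    have hBi0 : ((β i : ℝ):ℂ) ≠ 0 := hβC0 i
    have key : (∏ k ∈ Finset.univ.erase (0 : Fin m), y (γ k)) * ((β i :ℂ)) ^ (m-1)
        = (∏ k ∈ Finset.univ.erase (0 : Fin m), (β (γ k) : ℂ)) * (rot ℓ * y i ^ (m-1)) := by
      have h5 : ((ρ * β i ^ (m-1) : ℝ) : ℂ) = ((ρ:ℝ):ℂ) * ((β i :ℝ):ℂ) ^ (m-1) := by push_cast; ring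
      rw [h5] at htri
      apply mul_left_cancel₀ hAC0
      apply mul_left_cancel₀ hρC0
      calc (ρ:ℂ) * ((A γ:ℂ) * ((∏ k ∈ Finset.univ.erase (0 : Fin m), y (γ k)) * ((β i :ℂ)) ^ (m-1)))
          = ((A γ:ℂ) * ∏ k ∈ Finset.univ.erase (0 : Fin m), y (γ k)) * ((ρ:ℂ) * ((β i:ℂ)) ^ (m-1)) := by ring
        _ = ((A γ:ℂ) * ∏ k ∈ Finset.univ.erase (0 : Fin m), (β (γ k) : ℂ)) * (rot ℓ * (ρ:ℂ) * y i ^ (m-1)) := htri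
        _ = (ρ:ℂ) * ((A γ:ℂ) * ((∏ k ∈ Finset.univ.erase (0 : Fin m), (β (γ k) : ℂ)) * (rot ℓ * y i ^ (m-1)))) := by ring
    -- divide
    simp only [hddef]
    rw [Finset.prod_div_distrib, div_pow, ← mul_div_assoc]
    rw [div_eq_div_iff hPβ0 (pow_ne_zero _ hBi0)]
    calc (∏ k ∈ Finset.univ.erase (0 : Fin m), y (γ k)) * (β i:ℂ) ^ (m-1)
        = (∏ k ∈ Finset.univ.erase (0 : Fin m), (β (γ k):ℂ)) * (rot ℓ * y i ^ (m-1)) := key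
      _ = rot ℓ * y i ^ (m-1) * ∏ k ∈ Finset.univ.erase (0 : Fin m), (β (γ k):ℂ) := by ring
  -- full product
  have hfull0 : ∀ γ : Fin m → Fin n, A γ ≠ 0 →
      ∏ k, d (γ k) = rot ℓ * d (γ 0) ^ m := by
    intro γ hγ
    have hpowm : ∀ w : ℂ, w ^ m = w ^ (m-1) * w := by
      intro w
      conv_lhs => rw [← hm1']
      rw [pow_succ]
    rw [← Finset.mul_prod_erase Finset.univ (fun k => d (γ k)) (Finset.mem_univ (0 : Fin m)),
      halign γ hγ, hpowm (d (γ 0))]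
    ring
  have hfull : ∀ γ : Fin m → Fin n, A γ ≠ 0 → ∀ k₀ : Fin m,
      ∏ k, d (γ k) = rot ℓ * d (γ k₀) ^ m := by
    intro γ hγ k₀
    have hσ := hfull0 (γ ∘ Equiv.swap 0 k₀) (by rw [hsymm (Equiv.swap 0 k₀) γ]; exact hγ)
    have h1 : ∏ k, d ((γ ∘ Equiv.swap 0 k₀) k) = ∏ k, d (γ k) :=
      Equiv.prod_comp (Equiv.swap 0 k₀) (fun k => d (γ k))
    have h2 : (γ ∘ Equiv.swap 0 k₀) 0 = γ k₀ := by
      simp [Function.comp, Equiv.swap_apply_left]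
    rw [h1, h2] at hσ
    exact hσ
  -- d^m is constant along arcs
  have hdm_arc : ∀ i j, A.Arc i j → d i ^ m = d j ^ m := by
    rintro i j ⟨γ, hγ, hγ0, k, hk, hγk⟩
    have h1 := hfull γ hγ 0
    have h2 := hfull γ hγ k
    rw [hγ0] at h1
    rw [hγk] at h2
    exact mul_left_cancel₀ hrot0 (h1.symm.trans h2)
  have hdm_all : ∀ i, d i ^ m = d 0 ^ m := by
    intro i
    induction hirr 0 i with
    | refl => rfl
    | tail hab hbc ih => rw [← hdm_arc _ _ hbc]; exact ih
  -- normalize: q j = d j / d 0 is an m-th root of unity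
  set q : Fin n → ℂ := fun j => d j / d 0 with hqdef
  have hqm : ∀ j, q j ^ m = 1 := by
    intro j
    rw [hqdef]
    simp only
    rw [div_pow, hdm_all j, div_self (pow_ne_zero m (hd0 0))]
  have hq_eq : ∀ γ : Fin m → Fin n, A γ ≠ 0 → ∏ k, q (γ k) = rot ℓ := by
    intro γ hγ
    rw [hqdef]
    simp only
    rw [Finset.prod_div_distrib, Finset.prod_const, Finset.card_univ, Fintype.card_fin,
      hfull0 γ hγ, hdm_all (γ 0), mul_div_assoc, div_self (pow_ne_zero m (hd0 0)), mul_one]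
  -- extract integer phases
  choose φ hφ1 hφ2 hφ3 using fun j => root_extract (NeZero.ne m) (q j) (hqm j)
  refine ⟨φ, fun v => ⟨hφ1 v, hφ2 v⟩, ?_⟩
  intro γ hγ
  have hSle : m ≤ ∑ k, φ (γ k) := by
    calc m = ∑ _k : Fin m, 1 := by rw [Finset.sum_const, Finset.card_univ, Fintype.card_fin,
            smul_eq_mul, mul_one]
      _ ≤ ∑ k, φ (γ k) := Finset.sum_le_sum fun k _ => hφ1 _
  apply mod_arith (NeZero.ne m) hℓ _ hSle
  have hexp : Complex.exp (2 * (Real.pi:ℂ) * Complex.I * (((∑ k, φ (γ k) : ℕ):ℂ) / (m:ℂ)))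
      = ∏ k, q (γ k) := by
    rw [Finset.prod_congr rfl fun k (_ : k ∈ Finset.univ) => hφ3 (γ k), ← Complex.exp_sum]
    congr 1
    rw [Nat.cast_sum, Finset.sum_div, Finset.mul_sum]
  rw [hexp, hq_eq γ hγ]
  rfl
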